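/- The series Ψ(a,z) = ₁φ₁(a; 0; q², z) satisfies the contiguity relation Ψ(a,z) − Ψ(a,z/q²) = (1−a)(z/q²)Ψ(q²a,z). -/

import Mathlib

open scoped BigOperators

/-- The q-Pochhammer symbol (a;q)_n. -/
noncomputable def qPoch (a q : ℂ) (n : ℕ) : ℂ :=
  ∏ k ∈ Finset.range n, (1 - a * q ^ k)

/-- Ψ(a,z) = ₁φ₁(a; 0; q², z). -/
noncomputable def psi11 (q a z : ℂ) : ℂ :=
  ∑' n : ℕ, qPoch a (q ^ 2) n / qPoch (q ^ 2) (q ^ 2) n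
    * (-1) ^ n * q ^ (n * (n - 1)) * z ^ n

noncomputable def psiTerm (q a z : ℂ) (n : ℕ) : ℂ :=
  qPoch a (q ^ 2) n / qPoch (q ^ 2) (q ^ 2) n * (-1) ^ n * q ^ (n * (n - 1)) * z ^ n

lemma qPoch_factor_ne (q : ℂ) (hq : ‖q‖ < 1) (k : ℕ) :
    (1 : ℂ) - q ^ 2 * (q ^ 2) ^ k ≠ 0 := by
  have hk : (‖q‖ ^ 2) ^ k ≤ 1 :=
    pow_le_one₀ (by positivity) (by nlinarith [norm_nonneg q])
  have h : ‖q ^ 2 * (q ^ 2) ^ k‖ < 1 := by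
    rw [norm_mul, norm_pow, norm_pow, norm_pow]
    calc ‖q‖ ^ 2 * (‖q‖ ^ 2) ^ k ≤ ‖q‖ ^ 2 * 1 :=
          mul_le_mul_of_nonneg_left hk (by positivity)
      _ = ‖q‖ ^ 2 := by ring
      _ < 1 := by nlinarith [norm_nonneg q]
  intro h0
  have h1 : q ^ 2 * (q ^ 2) ^ k = 1 := by linear_combination -h0
  rw [h1] at h
  simp at h

lemma qPoch_ne (q : ℂ) (hq : ‖q‖ < 1) (n : ℕ) : qPoch (q ^ 2) (q ^ 2) n ≠ 0 :=
  Finset.prod_ne_zero_iff.2 fun k _ => qPoch_factor_ne q hq k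

lemma qPoch_norm_le (a q : ℂ) (hq : ‖q‖ ≤ 1) (n : ℕ) :
    ‖qPoch a q n‖ ≤ (1 + ‖a‖) ^ n := by
  unfold qPoch
  calc ‖∏ k ∈ Finset.range n, (1 - a * q ^ k)‖
      = ∏ k ∈ Finset.range n, ‖1 - a * q ^ k‖ := norm_prod _ _
    _ ≤ ∏ k ∈ Finset.range n, (1 + ‖a‖) := by
        apply Finset.prod_le_prod (fun k _ => norm_nonneg _)
        intro k _
        calc ‖1 - a * q ^ k‖ ≤ ‖(1:ℂ)‖ + ‖a * q ^ k‖ := norm_sub_le _ _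
          _ ≤ 1 + ‖a‖ := by
              rw [norm_one, norm_mul, norm_pow]
              have : ‖a‖ * ‖q‖ ^ k ≤ ‖a‖ * 1 :=
                mul_le_mul_of_nonneg_left (pow_le_one₀ (norm_nonneg q) hq) (norm_nonneg a)
              linarith
    _ = (1 + ‖a‖) ^ n := by rw [Finset.prod_const, Finset.card_range]

lemma qPoch_norm_ge (q : ℂ) (hq : ‖q‖ < 1) (n : ℕ) :
    (1 - ‖q‖ ^ 2) ^ n ≤ ‖qPoch (q ^ 2) (q ^ 2) n‖ := by
  unfold qPoch
  rw [norm_prod]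
  calc (1 - ‖q‖ ^ 2) ^ n = ∏ _k ∈ Finset.range n, (1 - ‖q‖ ^ 2) := by
        rw [Finset.prod_const, Finset.card_range]
    _ ≤ ∏ k ∈ Finset.range n, ‖1 - q ^ 2 * (q ^ 2) ^ k‖ := by
        apply Finset.prod_le_prod
        · intro k _; nlinarith [norm_nonneg q]
        · intro k _
          have h1 : ‖q ^ 2 * (q ^ 2) ^ k‖ ≤ ‖q‖ ^ 2 := by
            rw [norm_mul, norm_pow, norm_pow, norm_pow]
            calc ‖q‖ ^ 2 * (‖q‖ ^ 2) ^ k ≤ ‖q‖ ^ 2 * 1 :=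
                  mul_le_mul_of_nonneg_left
                    (pow_le_one₀ (by positivity) (by nlinarith [norm_nonneg q]))
                    (by positivity)
              _ = ‖q‖ ^ 2 := by ring
          calc 1 - ‖q‖ ^ 2 ≤ 1 - ‖q ^ 2 * (q ^ 2) ^ k‖ := by linarith
            _ = ‖(1:ℂ)‖ - ‖q ^ 2 * (q ^ 2) ^ k‖ := by rw [norm_one]
            _ ≤ ‖1 - q ^ 2 * (q ^ 2) ^ k‖ := norm_sub_norm_le _ _

lemma exp_succ (n : ℕ) : (n + 1) * (n + 1 - 1) = n * (n - 1) + 2 * n := by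
  cases n with
  | zero => rfl
  | succ m => simp only [Nat.add_sub_cancel]; ring

lemma summable_aux (C r : ℝ) (hC : 0 ≤ C) (hr0 : 0 ≤ r) (hr : r < 1) :
    Summable (fun n : ℕ => C ^ n * r ^ (n * (n - 1))) := by
  apply summable_of_ratio_norm_eventually_le (r := 1/2) (by norm_num)
  have h : Filter.Tendsto (fun n : ℕ => C * r ^ (2 * n)) Filter.atTop (nhds (C * 0)) := by
    apply Filter.Tendsto.const_mul
    exact (tendsto_pow_atTop_nhds_zero_of_lt_one hr0 hr).comp
      (Filter.tendsto_atTop_mono (fun n => by simp only [id_eq]; omega) Filter.tendsto_id)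
  rw [mul_zero] at h
  filter_upwards [h.eventually_le_const (by norm_num : (0:ℝ) < 1/2)] with n hn
  rw [exp_succ n, pow_add r]
  rw [Real.norm_of_nonneg (by positivity), Real.norm_of_nonneg (by positivity)]
  calc C ^ (n + 1) * (r ^ (n * (n - 1)) * r ^ (2 * n))
      = (C * r ^ (2 * n)) * (C ^ n * r ^ (n * (n - 1))) := by ring
    _ ≤ (1/2) * (C ^ n * r ^ (n * (n - 1))) :=
        mul_le_mul_of_nonneg_right hn (by positivity)

lemma summable_psiTerm (q a z : ℂ) (hq : ‖q‖ < 1) : Summable (psiTerm q a z) := by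
  have hq2 : (0:ℝ) < 1 - ‖q‖ ^ 2 := by nlinarith [norm_nonneg q]
  apply Summable.of_norm
  refine Summable.of_nonneg_of_le (fun n => norm_nonneg _) (fun n => ?_)
    (summable_aux ((1 + ‖a‖) / (1 - ‖q‖ ^ 2) * ‖z‖) ‖q‖ (by positivity) (norm_nonneg q) hq)
  unfold psiTerm
  simp only [norm_mul, norm_div, norm_pow, norm_neg, norm_one, one_pow, mul_one]
  rw [mul_pow, div_pow]
  have h1 : ‖qPoch a (q ^ 2) n‖ ≤ (1 + ‖a‖) ^ n :=
    qPoch_norm_le a (q ^ 2) (by rw [norm_pow]; nlinarith [norm_nonneg q]) n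
  have h2 : (1 - ‖q‖ ^ 2) ^ n ≤ ‖qPoch (q ^ 2) (q ^ 2) n‖ := qPoch_norm_ge q hq n
  have h3 : (0:ℝ) < (1 - ‖q‖ ^ 2) ^ n := by positivity
  have h4 : ‖qPoch a (q ^ 2) n‖ / ‖qPoch (q ^ 2) (q ^ 2) n‖
      ≤ (1 + ‖a‖) ^ n / (1 - ‖q‖ ^ 2) ^ n := div_le_div₀ (by positivity) h1 h3 h2
  calc ‖qPoch a (q ^ 2) n‖ / ‖qPoch (q ^ 2) (q ^ 2) n‖ * ‖q‖ ^ (n * (n - 1)) * ‖z‖ ^ n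
      ≤ (1 + ‖a‖) ^ n / (1 - ‖q‖ ^ 2) ^ n * ‖q‖ ^ (n * (n - 1)) * ‖z‖ ^ n :=
        mul_le_mul_of_nonneg_right (mul_le_mul_of_nonneg_right h4 (by positivity))
          (by positivity)
    _ = (1 + ‖a‖) ^ n / (1 - ‖q‖ ^ 2) ^ n * ‖z‖ ^ n * ‖q‖ ^ (n * (n - 1)) := by ring

lemma key (q a z : ℂ) (hq : ‖q‖ < 1) (hq0 : q ≠ 0) (n : ℕ) :
    psiTerm q a z (n + 1) - psiTerm q a (z / q ^ 2) (n + 1)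
      = (1 - a) * (z / q ^ 2) * psiTerm q (q ^ 2 * a) z n := by
  have hD : qPoch (q ^ 2) (q ^ 2) n ≠ 0 := qPoch_ne q hq n
  have hD' : (1 : ℂ) - q ^ 2 * (q ^ 2) ^ n ≠ 0 := qPoch_factor_ne q hq n
  have hnum : qPoch a (q ^ 2) (n + 1) = (1 - a) * qPoch (q ^ 2 * a) (q ^ 2) n := by
    unfold qPoch
    rw [Finset.prod_range_succ']
    simp only [pow_zero, mul_one]
    rw [mul_comm]
    congr 1
    apply Finset.prod_congr rfl
    intro k _
    ring
  have hden : qPoch (q ^ 2) (q ^ 2) (n + 1)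
      = qPoch (q ^ 2) (q ^ 2) n * (1 - q ^ 2 * (q ^ 2) ^ n) := by
    unfold qPoch
    rw [Finset.prod_range_succ]
  unfold psiTerm
  rw [hnum, hden, exp_succ n, div_pow]
  field_simp
  ring

/-- Contiguity relation Ψ(a,z) − Ψ(a,z/q²) = (1−a)(z/q²)Ψ(q²a,z). -/
theorem psi11_contiguity₂ (q a z : ℂ) (hq : ‖q‖ < 1) (hq0 : q ≠ 0) :
    psi11 q a z - psi11 q a (z / q ^ 2)
      = (1 - a) * (z / q ^ 2) * psi11 q (q ^ 2 * a) z := by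
  have hs1 : Summable (psiTerm q a z) := summable_psiTerm q a z hq
  have hs2 : Summable (psiTerm q a (z / q ^ 2)) := summable_psiTerm q a _ hq
  have hs3 : Summable (fun n => psiTerm q a z n - psiTerm q a (z / q ^ 2) n) := hs1.sub hs2
  show (∑' n, psiTerm q a z n) - (∑' n, psiTerm q a (z / q ^ 2) n)
      = (1 - a) * (z / q ^ 2) * ∑' n, psiTerm q (q ^ 2 * a) z n
  rw [← hs1.tsum_sub hs2, ← tsum_mul_left, hs3.tsum_eq_zero_add]
  have h0 : psiTerm q a z 0 - psiTerm q a (z / q ^ 2) 0 = 0 := by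
    simp [psiTerm, qPoch]
  rw [h0, zero_add]
  exact tsum_congr fun n => key q a z hq hq0 n
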